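/- Let a schedule χ of jobs J place the set L̃ before c and R̃ after c, with all jobs in L̃ preceding c. If every job j scheduled (weakly) after c in χ has completion time at most S := Σ_{i∈J} s_i, every job in L̃ has completion time at most S − s_c, and the optimal schedule π satisfies C_j^π ≥ s_c for every job j scheduled (weakly) after c in π, then whenever s_c ≥ (1 − ε/n)·S and Σ_{j∈R̃} w_j ≤ Σ_{j∈R} w_j (R the set after c in π) and C_j^χ ≤ C_j^π for all j ∈ L ∩ L̃, the objective of χ is at most ((1+ε/n)/(1−ε/n)) times the objective of π. -/

import Mathlib

noncomputable def compTime (n : ℕ) (τ : Equiv.Perm (Fin n)) (s : Fin n → ℝ) (j : Fin n) : ℝ :=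
  ∑ i ∈ Finset.univ.filter (fun i => τ.symm i ≤ τ.symm j), s i

theorem case1_approximation (n : ℕ) (hn : 3 ≤ n) (ε : ℝ) (hε0 : 0 < ε) (hε1 : ε ≤ 1)
    (w s : Fin n → ℝ) (hw : ∀ j, 0 ≤ w j) (hs : ∀ j, 0 ≤ s j)
    (c : Fin n) (π χ : Equiv.Perm (Fin n))
    -- S is the total processing time
    (S : ℝ) (hS : S = ∑ j : Fin n, s j)
    -- every job weakly after c in χ completes by S
    (hafterχ : ∀ j, χ.symm c ≤ χ.symm j → compTime n χ s j ≤ S)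
    -- every job in L̃ (strictly before c in χ) completes by S − s c
    (hLt : ∀ j, χ.symm j < χ.symm c → compTime n χ s j ≤ S - s c)
    -- in π, every job weakly after c completes no earlier than s c
    (hafterπ : ∀ j, π.symm c ≤ π.symm j → s c ≤ compTime n π s j)
    -- s c is large
    (hsc : (1 - ε / n) * S ≤ s c)
    -- total weight of R̃ is at most total weight of R
    (hRw : ∑ j ∈ Finset.univ.filter (fun j => χ.symm c < χ.symm j), w j ≤
           ∑ j ∈ Finset.univ.filter (fun j => π.symm c < π.symm j), w j)
    -- for jobs in L ∩ L̃, completion in χ is at most completion in π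
    (hLL : ∀ j, π.symm j < π.symm c → χ.symm j < χ.symm c →
        compTime n χ s j ≤ compTime n π s j)
    -- for jobs in R ∩ L̃, completion in χ is at most (ε/n)·S
    (hRL : ∀ j, π.symm c < π.symm j → χ.symm j < χ.symm c →
        compTime n χ s j ≤ (ε / n) * S) :
    ∑ j : Fin n, w j * compTime n χ s j ≤
      ((1 + ε / n) / (1 - ε / n)) * ∑ j : Fin n, w j * compTime n π s j := by
  have hn3 : (3:ℝ) ≤ n := by exact_mod_cast hn
  have hn0 : (0:ℝ) < n := by linarith
  set ρ := ε / n with hρdef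
  have hρ0 : 0 < ρ := div_pos hε0 hn0
  have hρ1 : ρ < 1 := by
    rw [hρdef, div_lt_one hn0]; linarith
  have h1ρ : 0 < 1 - ρ := by linarith
  have hS0 : 0 ≤ S := hS ▸ Finset.sum_nonneg fun j _ => hs j
  have hCπ : ∀ j, 0 ≤ compTime n π s j := fun j =>
    Finset.sum_nonneg fun i _ => hs i
  have hK : 1 ≤ (1 + ρ) / (1 - ρ) := by
    rw [le_div_iff₀ h1ρ]; linarith
  set LL := Finset.univ.filter (fun j => π.symm j < π.symm c ∧ χ.symm j < χ.symm c) with hLLdef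
  set RL := Finset.univ.filter (fun j => π.symm c < π.symm j ∧ χ.symm j < χ.symm c) with hRLdef
  set Ach := Finset.univ.filter (fun j : Fin n => χ.symm c ≤ χ.symm j) with hAchdef
  set Api := Finset.univ.filter (fun j : Fin n => π.symm c ≤ π.symm j) with hApidef
  set Rch := Finset.univ.filter (fun j : Fin n => χ.symm c < χ.symm j) with hRchdef
  set Rpi := Finset.univ.filter (fun j : Fin n => π.symm c < π.symm j) with hRpidef
  have key : ∀ j : Fin n, χ.symm j < χ.symm c → ¬ π.symm j < π.symm c → π.symm c < π.symm j := by
    intro j hj hq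
    rcases lt_or_eq_of_le (not_lt.mp hq) with h | h
    · exact h
    · exfalso
      have hjc : c = j := π.symm.injective h
      rw [hjc] at hj
      exact lt_irrefl _ hj
  have hsplit : ∀ f : Fin n → ℝ, ∑ j : Fin n, f j =
      ∑ j ∈ LL, f j + ∑ j ∈ RL, f j + ∑ j ∈ Ach, f j := by
    intro f
    rw [← Finset.sum_filter_add_sum_filter_not Finset.univ (fun j => χ.symm j < χ.symm c) f]
    have h2 : Finset.univ.filter (fun j : Fin n => ¬ χ.symm j < χ.symm c) = Ach := by
      simp [hAchdef, not_lt]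
    rw [h2]
    congr 1
    rw [← Finset.sum_filter_add_sum_filter_not
      (Finset.univ.filter fun j : Fin n => χ.symm j < χ.symm c)
      (fun j => π.symm j < π.symm c) f]
    congr 1
    · apply Finset.sum_congr _ (fun _ _ => rfl)
      rw [Finset.filter_filter]
      ext j
      simp [hLLdef, and_comm]
    · apply Finset.sum_congr _ (fun _ _ => rfl)
      rw [Finset.filter_filter]
      ext j
      simp only [Finset.mem_filter, Finset.mem_univ, true_and, hRLdef]
      constructor
      · rintro ⟨h1, h2⟩; exact ⟨key j h1 h2, h1⟩
      · rintro ⟨h1, h2⟩; exact ⟨h2, not_lt.mpr h1.le⟩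
  have hLHS : ∑ j : Fin n, w j * compTime n χ s j ≤
      (∑ j ∈ LL, w j * compTime n π s j) + (∑ j ∈ RL, w j) * (ρ * S)
        + (∑ j ∈ Ach, w j) * S := by
    rw [hsplit (fun j => w j * compTime n χ s j), Finset.sum_mul, Finset.sum_mul]
    apply add_le_add (add_le_add _ _) _
    · apply Finset.sum_le_sum
      intro j hj
      simp only [hLLdef, Finset.mem_filter] at hj
      exact mul_le_mul_of_nonneg_left (hLL j hj.2.1 hj.2.2) (hw j)
    · apply Finset.sum_le_sum
      intro j hj
      simp only [hRLdef, Finset.mem_filter] at hj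
      refine le_trans (mul_le_mul_of_nonneg_left (hRL j hj.2.1 hj.2.2) (hw j))
        (le_of_eq (by ring))
    · apply Finset.sum_le_sum
      intro j hj
      simp only [hAchdef, Finset.mem_filter] at hj
      exact mul_le_mul_of_nonneg_left (hafterχ j hj.2) (hw j)
  have hRHS : (∑ j ∈ LL, w j * compTime n π s j) + (∑ j ∈ Api, w j) * ((1 - ρ) * S)
      ≤ ∑ j : Fin n, w j * compTime n π s j := by
    have h1 : (∑ j ∈ Api, w j) * ((1 - ρ) * S) ≤ ∑ j ∈ Api, w j * compTime n π s j := by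
      rw [Finset.sum_mul]
      apply Finset.sum_le_sum
      intro j hj
      simp only [hApidef, Finset.mem_filter] at hj
      have := hafterπ j hj.2
      exact mul_le_mul_of_nonneg_left (le_trans hsc this) (hw j)
    have hdisj : Disjoint LL Api := by
      rw [Finset.disjoint_left]
      intro j hjLL hjApi
      simp only [hLLdef, Finset.mem_filter] at hjLL
      simp only [hApidef, Finset.mem_filter] at hjApi
      exact absurd hjLL.2.1 (not_lt.mpr hjApi.2)
    calc (∑ j ∈ LL, w j * compTime n π s j) + (∑ j ∈ Api, w j) * ((1 - ρ) * S)
        ≤ (∑ j ∈ LL, w j * compTime n π s j) + ∑ j ∈ Api, w j * compTime n π s j :=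
          add_le_add le_rfl h1
      _ = ∑ j ∈ LL ∪ Api, w j * compTime n π s j := (Finset.sum_union hdisj).symm
      _ ≤ ∑ j : Fin n, w j * compTime n π s j := by
          apply Finset.sum_le_sum_of_subset_of_nonneg (Finset.subset_univ _)
          intro j _ _
          exact mul_nonneg (hw j) (hCπ j)
  -- decompose Ach and Api
  have hcAch : c ∉ Rch := by simp [hRchdef]
  have hcApi : c ∉ Rpi := by simp [hRpidef]
  have hAchIns : Ach = insert c Rch := by
    ext j
    simp only [hAchdef, hRchdef, Finset.mem_insert, Finset.mem_filter, Finset.mem_univ, true_and]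
    constructor
    · intro h
      rcases lt_or_eq_of_le h with h' | h'
      · exact Or.inr h'
      · exact Or.inl (χ.symm.injective h'.symm)
    · rintro (rfl | h)
      · exact le_refl _
      · exact h.le
  have hApiIns : Api = insert c Rpi := by
    ext j
    simp only [hApidef, hRpidef, Finset.mem_insert, Finset.mem_filter, Finset.mem_univ, true_and]
    constructor
    · intro h
      rcases lt_or_eq_of_le h with h' | h'
      · exact Or.inr h'
      · exact Or.inl (π.symm.injective h'.symm)
    · rintro (rfl | h)
      · exact le_refl _
      · exact h.le
  have hAchSum : ∑ j ∈ Ach, w j = w c + ∑ j ∈ Rch, w j := by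
    rw [hAchIns, Finset.sum_insert hcAch]
  have hApiSum : ∑ j ∈ Api, w j = w c + ∑ j ∈ Rpi, w j := by
    rw [hApiIns, Finset.sum_insert hcApi]
  have hRLsub : ∑ j ∈ RL, w j ≤ ∑ j ∈ Rpi, w j := by
    apply Finset.sum_le_sum_of_subset_of_nonneg
    · intro j hj
      simp only [hRLdef, Finset.mem_filter] at hj
      simp only [hRpidef, Finset.mem_filter, Finset.mem_univ, true_and]
      exact hj.2.1
    · intro j _ _; exact hw j
  have hT1 : 0 ≤ ∑ j ∈ LL, w j * compTime n π s j :=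
    Finset.sum_nonneg fun j _ => mul_nonneg (hw j) (hCπ j)
  have hRpi0 : 0 ≤ ∑ j ∈ Rpi, w j := Finset.sum_nonneg fun j _ => hw j
  -- final arithmetic
  set T1 := ∑ j ∈ LL, w j * compTime n π s j
  set a := ∑ j ∈ RL, w j
  set r := ∑ j ∈ Rpi, w j
  set b := ∑ j ∈ Rch, w j
  have hb : b ≤ r := hRw
  have hK1 : (1 + ρ) / (1 - ρ) * (1 - ρ) = 1 + ρ := by
    field_simp
  calc ∑ j : Fin n, w j * compTime n χ s j
      ≤ T1 + a * (ρ * S) + (w c + b) * S := by rw [← hAchSum]; exact hLHS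
    _ ≤ (1 + ρ) / (1 - ρ) * (T1 + (w c + r) * ((1 - ρ) * S)) := by
        have hEq : (1 + ρ) / (1 - ρ) * (T1 + (w c + r) * ((1 - ρ) * S)) =
            (1 + ρ) / (1 - ρ) * T1 + (1 + ρ) * ((w c + r) * S) := by
          field_simp
        rw [hEq]
        have h1 : T1 ≤ (1 + ρ) / (1 - ρ) * T1 := le_mul_of_one_le_left hT1 hK
        have h2 : a * (ρ * S) + (w c + b) * S ≤ (1 + ρ) * ((w c + r) * S) := by
          have e1 : a * (ρ * S) ≤ r * (ρ * S) :=
            mul_le_mul_of_nonneg_right hRLsub (mul_nonneg hρ0.le hS0)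
          have e2 : (w c + b) * S ≤ (w c + r) * S :=
            mul_le_mul_of_nonneg_right (by linarith) hS0
          have e3 : 0 ≤ w c * (ρ * S) := mul_nonneg (hw c) (mul_nonneg hρ0.le hS0)
          nlinarith [hw c, hS0, hρ0.le]
        linarith [h1, h2]
    _ ≤ (1 + ρ) / (1 - ρ) * ∑ j : Fin n, w j * compTime n π s j := by
        apply mul_le_mul_of_nonneg_left _ (le_trans zero_le_one hK)
        rw [← hApiSum]
        exact hRHS
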